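/- For each a ∈ (-1,0) ∪ (0,1) there exists a non-constant, non-periodic solution M = (M₁,M₂,M₃) : ℝ → ℝ³ of the system Ṁ₁ = M₂M₃ + (3/(1+a))·sign(a)·M₂, Ṁ₂ = -M₁M₃ - (3(1+a)/(4|a|))·M₁, Ṁ₃ = (1/(4a²) - 1/(a(1+a)²))·M₁M₂ satisfying (M₁(t)² + M₂(t)²)/(2|a|(1+a)) + 3M₃(t) + (9/16)·(a²+6a+1)/(|a|(1+a)) = 0 for all t. -/

import Mathlib

open Real


def Concl (m p q γ L : ℝ) : Prop :=
  ∃ M₁ M₂ M₃ : ℝ → ℝ,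
    (∀ t, HasDerivAt M₁ (M₂ t * (M₃ t + (p / 2 - m))) t) ∧
    (∀ t, HasDerivAt M₂ (-(M₁ t * (M₃ t + (q / 2 - m)))) t) ∧
    (∀ t, HasDerivAt M₃ (γ * (M₁ t * M₂ t)) t) ∧
    (∀ t, M₂ t = 0 ↔ t = 0) ∧
    (∀ t, M₁ t ^ 2 + M₂ t ^ 2 = L * (m - M₃ t))

lemma hasDerivAt_cosh_mul (h t : ℝ) :
    HasDerivAt (fun s => Real.cosh (h * s)) (h * Real.sinh (h * t)) t := by
  refine ((Real.hasDerivAt_cosh (h * t)).comp t ((hasDerivAt_id t).const_mul h)).congr_deriv ?_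
  simp [mul_comm]

lemma hasDerivAt_sinh_mul (h t : ℝ) :
    HasDerivAt (fun s => Real.sinh (h * s)) (h * Real.cosh (h * t)) t := by
  refine ((Real.hasDerivAt_sinh (h * t)).comp t ((hasDerivAt_id t).const_mul h)).congr_deriv ?_
  simp [mul_comm]

lemma coreHom (m p q γ L : ℝ) (hp : p < 0) (hq : 0 < q) (hγ : 0 < γ)
    (hL : q - p = γ * L) : Concl m p q γ L := by
  have hr0 : 0 < q - p := by linarith
  have hqr : 0 ≤ q * (q - p) / γ := by positivity
  have hpq : (0:ℝ) < -(p * q) := by nlinarith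
  set k : ℝ := Real.sqrt (q * (q - p) / γ) with hkdef
  set h : ℝ := Real.sqrt (-(p * q)) / 2 with hhdef
  have hk2 : k ^ 2 = q * (q - p) / γ := Real.sq_sqrt hqr
  have hkr : γ * k ^ 2 = q * (q - p) := by rw [hk2]; field_simp
  have hkL : k ^ 2 = q * L := by
    rw [hk2, hL]; field_simp
  have hh2 : h ^ 2 = -(p * q) / 4 := by
    rw [hhdef, div_pow, Real.sq_sqrt hpq.le]; norm_num
  have hh0 : 0 < h := by rw [hhdef]; positivity
  have hk0 : 0 < k := Real.sqrt_pos.mpr (by positivity)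
  clear_value k h
  have hD : ∀ t : ℝ, 0 < (q - p) * Real.cosh (h * t) ^ 2 - q := by
    intro t
    have h1 := Real.one_le_cosh (h * t)
    have hc2 : 1 ≤ Real.cosh (h * t) ^ 2 := by nlinarith
    nlinarith [mul_le_mul_of_nonneg_left hc2 (le_of_lt hr0)]
  refine ⟨fun t => -p * k * Real.cosh (h * t) / ((q - p) * Real.cosh (h * t) ^ 2 - q),
      fun t => 2 * k * h * Real.sinh (h * t) / ((q - p) * Real.cosh (h * t) ^ 2 - q),
      fun t => m + p * q / ((q - p) * Real.cosh (h * t) ^ 2 - q),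
      fun t => ?_, fun t => ?_, fun t => ?_, fun t => ?_, ?_⟩
  · have hDt : HasDerivAt (fun s => (q - p) * Real.cosh (h * s) ^ 2 - q)
        ((q - p) * ((2 : ℕ) * Real.cosh (h * t) ^ 1 * (h * Real.sinh (h * t)))) t :=
      (((hasDerivAt_cosh_mul h t).pow 2).const_mul (q - p)).sub_const q
    have H := ((hasDerivAt_cosh_mul h t).const_mul (-p * k)).div hDt (hD t).ne'
    refine H.congr_deriv (Eq.symm ?_)
    have e1 : (2 * k * h * Real.sinh (h * t) / ((q - p) * Real.cosh (h * t) ^ 2 - q)) *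
        ((m + p * q / ((q - p) * Real.cosh (h * t) ^ 2 - q)) + (p / 2 - m)) =
        (2 * k * h * Real.sinh (h * t) *
          (m * ((q - p) * Real.cosh (h * t) ^ 2 - q) + p * q
            + (p / 2 - m) * ((q - p) * Real.cosh (h * t) ^ 2 - q))) /
          ((q - p) * Real.cosh (h * t) ^ 2 - q) ^ 2 := by
      field_simp [(hD t).ne']
    rw [e1]
    push_cast
    ring
  · have hDt : HasDerivAt (fun s => (q - p) * Real.cosh (h * s) ^ 2 - q)
        ((q - p) * ((2 : ℕ) * Real.cosh (h * t) ^ 1 * (h * Real.sinh (h * t)))) t :=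
      (((hasDerivAt_cosh_mul h t).pow 2).const_mul (q - p)).sub_const q
    have H := ((hasDerivAt_sinh_mul h t).const_mul (2 * k * h)).div hDt (hD t).ne'
    refine H.congr_deriv (Eq.symm ?_)
    have e1 : -((-p * k * Real.cosh (h * t) / ((q - p) * Real.cosh (h * t) ^ 2 - q)) *
        ((m + p * q / ((q - p) * Real.cosh (h * t) ^ 2 - q)) + (q / 2 - m))) =
        (p * k * Real.cosh (h * t) *
          (m * ((q - p) * Real.cosh (h * t) ^ 2 - q) + p * q
            + (q / 2 - m) * ((q - p) * Real.cosh (h * t) ^ 2 - q))) /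
          ((q - p) * Real.cosh (h * t) ^ 2 - q) ^ 2 := by
      field_simp [(hD t).ne', (by linarith [hD t] : Real.cosh (h * t) ^ 2 * (q - p) - q ≠ 0)]
    rw [e1]
    congr 1
    push_cast
    linear_combination
      (-2 * k * Real.cosh (h * t) * (((q - p) * Real.cosh (h * t) ^ 2 - q)
          - 2 * (q - p) * Real.sinh (h * t) ^ 2)) * hh2
      + (p * k * q * (q - p) * Real.cosh (h * t)) * (Real.cosh_sq_sub_sinh_sq (h * t))
  · have hDt : HasDerivAt (fun s => (q - p) * Real.cosh (h * s) ^ 2 - q)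
        ((q - p) * ((2 : ℕ) * Real.cosh (h * t) ^ 1 * (h * Real.sinh (h * t)))) t :=
      (((hasDerivAt_cosh_mul h t).pow 2).const_mul (q - p)).sub_const q
    have H := ((hasDerivAt_const t (p * q)).div hDt (hD t).ne').const_add m
    refine H.congr_deriv (Eq.symm ?_)
    have e1 : γ * ((-p * k * Real.cosh (h * t) / ((q - p) * Real.cosh (h * t) ^ 2 - q)) *
        (2 * k * h * Real.sinh (h * t) / ((q - p) * Real.cosh (h * t) ^ 2 - q))) =
        (-2 * γ * p * k ^ 2 * h * Real.cosh (h * t) * Real.sinh (h * t)) /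
          ((q - p) * Real.cosh (h * t) ^ 2 - q) ^ 2 := by
      field_simp [(hD t).ne']
    rw [e1]
    congr 1
    push_cast
    linear_combination (-2 * p * h * Real.cosh (h * t) * Real.sinh (h * t)) * hkr
  · rw [div_eq_zero_iff]
    constructor
    · rintro (h1 | h1)
      · have : Real.sinh (h * t) = 0 := by
          rcases mul_eq_zero.mp h1 with h2 | h2
          · rcases mul_eq_zero.mp h2 with h3 | h3
            · rcases mul_eq_zero.mp h3 with h4 | h4
              · norm_num at h4
              · exact absurd h4 hk0.ne'
            · exact absurd h3 hh0.ne'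
          · exact h2
        have := Real.sinh_eq_zero.mp this
        rcases mul_eq_zero.mp this with h2 | h2
        · exact absurd h2 hh0.ne'
        · exact h2
      · exact absurd h1 (hD t).ne'
    · rintro rfl
      simp
  · intro t
    have key : (-p * k * Real.cosh (h * t)) ^ 2 + (2 * k * h * Real.sinh (h * t)) ^ 2 =
        -(L * p * q) * ((q - p) * Real.cosh (h * t) ^ 2 - q) := by
      linear_combination (-(p * ((q - p) * Real.cosh (h * t) ^ 2 - q))) * hkL
        + (p * q * k ^ 2) * (Real.cosh_sq_sub_sinh_sq (h * t))
        + (4 * k ^ 2 * Real.sinh (h * t) ^ 2) * hh2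
    calc (-p * k * Real.cosh (h * t) / ((q - p) * Real.cosh (h * t) ^ 2 - q)) ^ 2 +
        (2 * k * h * Real.sinh (h * t) / ((q - p) * Real.cosh (h * t) ^ 2 - q)) ^ 2
        = ((-p * k * Real.cosh (h * t)) ^ 2 + (2 * k * h * Real.sinh (h * t)) ^ 2) /
            ((q - p) * Real.cosh (h * t) ^ 2 - q) ^ 2 := by
          rw [div_pow, div_pow, ← add_div]
      _ = (-(L * p * q) * ((q - p) * Real.cosh (h * t) ^ 2 - q)) /
            ((q - p) * Real.cosh (h * t) ^ 2 - q) ^ 2 := by rw [key]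
      _ = L * (m - (m + p * q / ((q - p) * Real.cosh (h * t) ^ 2 - q))) := by
          field_simp [(hD t).ne']
          ring

lemma coreHet (m p q γ L : ℝ) (hp : 0 < p) (hpq : p < q) (hγ : 0 < γ)
    (hL : q - p = γ * L) : Concl m p q γ L := by
  have hr0 : 0 < q - p := by linarith
  set g : ℝ := Real.sqrt γ with hgdef
  set w : ℝ := Real.sqrt (p * (q - p) / 2) with hwdef
  set e : ℝ := Real.sqrt (p * (q - p) / 2 + (q - p) ^ 2 / 4) with hedef
  have hg : g ^ 2 = γ := Real.sq_sqrt hγ.le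
  have hg0 : 0 < g := Real.sqrt_pos.mpr hγ
  have hw2 : w ^ 2 = p * (q - p) / 2 := Real.sq_sqrt (by positivity)
  have hw0 : 0 < w := Real.sqrt_pos.mpr (by positivity)
  have he2 : e ^ 2 = p * (q - p) / 2 + (q - p) ^ 2 / 4 := Real.sq_sqrt (by positivity)
  have he0 : 0 < e := Real.sqrt_pos.mpr (by positivity)
  clear_value g w e
  have hd : ∀ t : ℝ, 0 < e * Real.cosh (w * t) + (q - p) / 2 := by
    intro t
    have := Real.cosh_pos (w * t)
    nlinarith
  have hgd : ∀ t : ℝ, g * (e * Real.cosh (w * t) + (q - p) / 2) ≠ 0 := by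
    intro t
    exact (mul_pos hg0 (hd t)).ne'
  refine ⟨fun t => p * (q - p) / 2 / (g * (e * Real.cosh (w * t) + (q - p) / 2)),
      fun t => -(w * e) * Real.sinh (w * t) / (g * (e * Real.cosh (w * t) + (q - p) / 2)),
      fun t => (m - p / 2) + p * (q - p) / 2 / (e * Real.cosh (w * t) + (q - p) / 2),
      fun t => ?_, fun t => ?_, fun t => ?_, fun t => ?_, ?_⟩
  · have hdt : HasDerivAt (fun s => e * Real.cosh (w * s) + (q - p) / 2)
        (e * (w * Real.sinh (w * t))) t :=
      ((hasDerivAt_cosh_mul w t).const_mul e).add_const ((q - p) / 2)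
    have H := ((hasDerivAt_const t (p * (q - p) / 2)).div (hdt.const_mul g) (hgd t))
    refine H.congr_deriv (Eq.symm ?_)
    field_simp [(hd t).ne']
    ring
  · have hdt : HasDerivAt (fun s => e * Real.cosh (w * s) + (q - p) / 2)
        (e * (w * Real.sinh (w * t))) t :=
      ((hasDerivAt_cosh_mul w t).const_mul e).add_const ((q - p) / 2)
    have H := (((hasDerivAt_sinh_mul w t).const_mul (-(w * e))).div (hdt.const_mul g) (hgd t))
    refine H.congr_deriv (Eq.symm ?_)
    have e1 : -((p * (q - p) / 2 / (g * (e * Real.cosh (w * t) + (q - p) / 2))) *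
        (((m - p / 2) + p * (q - p) / 2 / (e * Real.cosh (w * t) + (q - p) / 2)) + (q / 2 - m))) =
        (-(p * (q - p) / 2 * g * (2 * (p * (q - p) / 2)
            + (q - p) * (e * Real.cosh (w * t) + (q - p) / 2)) / 2)) /
          (g * (e * Real.cosh (w * t) + (q - p) / 2)) ^ 2 := by
      field_simp [(hd t).ne']
      ring
    rw [e1]
    congr 1
    linear_combination (g * (e ^ 2 + e * (q - p) * Real.cosh (w * t) / 2)) * hw2
      + (g * (p * (q - p) / 2)) * he2
      + (g * w ^ 2 * e ^ 2) * (Real.cosh_sq_sub_sinh_sq (w * t))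
  · have hdt : HasDerivAt (fun s => e * Real.cosh (w * s) + (q - p) / 2)
        (e * (w * Real.sinh (w * t))) t :=
      ((hasDerivAt_cosh_mul w t).const_mul e).add_const ((q - p) / 2)
    have H := ((hasDerivAt_const t (p * (q - p) / 2)).div hdt (hd t).ne').const_add (m - p / 2)
    refine H.congr_deriv (Eq.symm ?_)
    rw [← hg]
    field_simp [(hd t).ne', hg0.ne']
    ring
  · rw [div_eq_zero_iff]
    constructor
    · rintro (h1 | h1)
      · have hs0 : Real.sinh (w * t) = 0 := by
          rcases mul_eq_zero.mp h1 with h2 | h2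
          · exact absurd (neg_eq_zero.mp h2) (mul_pos hw0 he0).ne'
          · exact h2
        rcases mul_eq_zero.mp (Real.sinh_eq_zero.mp hs0) with h2 | h2
        · exact absurd h2 hw0.ne'
        · exact h2
      · exact absurd h1 (hgd t)
    · rintro rfl
      simp
  · intro t
    have key : (p * (q - p) / 2) ^ 2 + (-(w * e) * Real.sinh (w * t)) ^ 2 =
        L * g ^ 2 * (p * (e * Real.cosh (w * t) + (q - p) / 2) / 2 - p * (q - p) / 2) *
          (e * Real.cosh (w * t) + (q - p) / 2) := by
      linear_combination
        (-(L * (p * (e * Real.cosh (w * t) + (q - p) / 2) / 2 - p * (q - p) / 2) *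
            (e * Real.cosh (w * t) + (q - p) / 2))) * hg
        + ((p * (e * Real.cosh (w * t) + (q - p) / 2) / 2 - p * (q - p) / 2) *
            (e * Real.cosh (w * t) + (q - p) / 2)) * hL
        + ((e * Real.cosh (w * t) + (q - p) / 2) ^ 2
            - (q - p) * (e * Real.cosh (w * t) + (q - p) / 2) + (q - p) ^ 2 / 4 - e ^ 2) * hw2
        + (-(p * (q - p) / 2)) * he2
        + (-(w ^ 2 * e ^ 2)) * (Real.cosh_sq_sub_sinh_sq (w * t))
    calc (p * (q - p) / 2 / (g * (e * Real.cosh (w * t) + (q - p) / 2))) ^ 2 +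
        (-(w * e) * Real.sinh (w * t) / (g * (e * Real.cosh (w * t) + (q - p) / 2))) ^ 2
        = ((p * (q - p) / 2) ^ 2 + (-(w * e) * Real.sinh (w * t)) ^ 2) /
            (g * (e * Real.cosh (w * t) + (q - p) / 2)) ^ 2 := by
          rw [div_pow (p * (q - p) / 2) (g * (e * Real.cosh (w * t) + (q - p) / 2)) 2,
            div_pow (-(w * e) * Real.sinh (w * t)) (g * (e * Real.cosh (w * t) + (q - p) / 2)) 2,
            ← add_div]
      _ = (L * g ^ 2 * (p * (e * Real.cosh (w * t) + (q - p) / 2) / 2 - p * (q - p) / 2) *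
            (e * Real.cosh (w * t) + (q - p) / 2)) /
            (g * (e * Real.cosh (w * t) + (q - p) / 2)) ^ 2 := by rw [key]
      _ = L * (m - ((m - p / 2) + p * (q - p) / 2 / (e * Real.cosh (w * t) + (q - p) / 2))) := by
          field_simp [(hd t).ne', hg0.ne']
          ring

lemma coreDeg (m q γ L : ℝ) (hq : 0 < q) (hγ : 0 < γ)
    (hL : q = γ * L) : Concl m 0 q γ L := by
  set g : ℝ := Real.sqrt γ with hgdef
  have hg : g ^ 2 = γ := Real.sq_sqrt hγ.le
  have hg0 : 0 < g := Real.sqrt_pos.mpr hγ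
  clear_value g
  have hW : ∀ t : ℝ, 0 < 1 + q ^ 2 / 4 * t ^ 2 := fun t => by positivity
  have hgW : ∀ t : ℝ, g * (1 + q ^ 2 / 4 * t ^ 2) ≠ 0 := fun t => (mul_pos hg0 (hW t)).ne'
  have hWt : ∀ t : ℝ, HasDerivAt (fun s : ℝ => 1 + q ^ 2 / 4 * s ^ 2) (q ^ 2 / 4 * (2 * t)) t := by
    intro t
    have := ((hasDerivAt_pow 2 t).const_mul (q ^ 2 / 4)).const_add 1
    simpa using this
  refine ⟨fun t => -q / (g * (1 + q ^ 2 / 4 * t ^ 2)),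
      fun t => -(q ^ 2 / 2) * t / (g * (1 + q ^ 2 / 4 * t ^ 2)),
      fun t => m + -q / (1 + q ^ 2 / 4 * t ^ 2),
      fun t => ?_, fun t => ?_, fun t => ?_, fun t => ?_, fun t => ?_⟩
  · have H := (hasDerivAt_const t (-q)).div ((hWt t).const_mul g) (hgW t)
    refine H.congr_deriv (Eq.symm ?_)
    field_simp [(hW t).ne']
    ring
  · have H := (((hasDerivAt_id t).const_mul (-(q ^ 2 / 2))).div
      ((hWt t).const_mul g) (hgW t))
    refine H.congr_deriv (Eq.symm ?_)
    simp only [id_eq]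
    field_simp [(hW t).ne']
    ring
  · have H := ((hasDerivAt_const t (-q)).div (hWt t) (hW t).ne').const_add m
    refine H.congr_deriv (Eq.symm ?_)
    rw [← hg]
    field_simp [(hW t).ne', hg0.ne']
    ring
  · rw [div_eq_zero_iff]
    constructor
    · rintro (h1 | h1)
      · rcases mul_eq_zero.mp h1 with h2 | h2
        · exact absurd (neg_eq_zero.mp h2) (by positivity : q ^ 2 / 2 ≠ 0)
        · exact h2
      · exact absurd h1 (hgW t)
    · rintro rfl
      simp
  · have key : (-q) ^ 2 + (-(q ^ 2 / 2) * t) ^ 2 =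
        L * g ^ 2 * q * (1 + q ^ 2 / 4 * t ^ 2) := by
      linear_combination (q * (1 + q ^ 2 / 4 * t ^ 2)) * hL
        + (-(L * q * (1 + q ^ 2 / 4 * t ^ 2))) * hg
    calc (-q / (g * (1 + q ^ 2 / 4 * t ^ 2))) ^ 2 +
        (-(q ^ 2 / 2) * t / (g * (1 + q ^ 2 / 4 * t ^ 2))) ^ 2
        = ((-q) ^ 2 + (-(q ^ 2 / 2) * t) ^ 2) / (g * (1 + q ^ 2 / 4 * t ^ 2)) ^ 2 := by
          rw [div_pow (-q) (g * (1 + q ^ 2 / 4 * t ^ 2)) 2,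
            div_pow (-(q ^ 2 / 2) * t) (g * (1 + q ^ 2 / 4 * t ^ 2)) 2, ← add_div]
      _ = (L * g ^ 2 * q * (1 + q ^ 2 / 4 * t ^ 2)) / (g * (1 + q ^ 2 / 4 * t ^ 2)) ^ 2 := by
          rw [key]
      _ = L * (m - (m + -q / (1 + q ^ 2 / 4 * t ^ 2))) := by
          field_simp [(hW t).ne', hg0.ne']
          ring

lemma glue (a m p q γ L : ℝ)
    (hγdef : γ = 1 / (4 * a ^ 2) - 1 / (a * (1 + a) ^ 2))
    (hα : p / 2 - m = 3 / (1 + a) * Real.sign a)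
    (hβ : q / 2 - m = 3 * (1 + a) / (4 * |a|))
    (hC : ∀ x : ℝ, L * (m - x) / (2 * |a| * (1 + a)) + 3 * x
      + 9 / 16 * (a ^ 2 + 6 * a + 1) / (|a| * (1 + a)) = 0)
    (hc : Concl m p q γ L) :
    ∃ M₁ M₂ M₃ : ℝ → ℝ,
      (∀ t, HasDerivAt M₁
        (M₂ t * M₃ t + (3 / (1 + a)) * Real.sign a * M₂ t) t) ∧
      (∀ t, HasDerivAt M₂
        (-(M₁ t * M₃ t) - (3 * (1 + a) / (4 * |a|)) * M₁ t) t) ∧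
      (∀ t, HasDerivAt M₃
        ((1 / (4 * a ^ 2) - 1 / (a * (1 + a) ^ 2)) * M₁ t * M₂ t) t) ∧
      (¬ ∀ t : ℝ, (M₁ t, M₂ t, M₃ t) = (M₁ 0, M₂ 0, M₃ 0)) ∧
      (¬ ∃ T : ℝ, 0 < T ∧ ∀ t : ℝ,
        (M₁ (t + T), M₂ (t + T), M₃ (t + T)) = (M₁ t, M₂ t, M₃ t)) ∧
      (∀ t : ℝ,
        (M₁ t ^ 2 + M₂ t ^ 2) / (2 * |a| * (1 + a)) + 3 * M₃ t
          + (9 / 16) * (a ^ 2 + 6 * a + 1) / (|a| * (1 + a)) = 0) := by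
  obtain ⟨M₁, M₂, M₃, h1, h2, h3, h4, h5⟩ := hc
  refine ⟨M₁, M₂, M₃, fun t => ?_, fun t => ?_, fun t => ?_, ?_, ?_, fun t => ?_⟩
  · convert h1 t using 1
    rw [← hα]; ring
  · convert h2 t using 1
    rw [← hβ]; ring
  · convert h3 t using 1
    rw [← hγdef]; ring
  · intro hcontra
    have h20 : M₂ 0 = 0 := (h4 0).mpr rfl
    have h21 : M₂ 1 = 0 := by
      have := hcontra 1
      simp only [Prod.mk.injEq] at this
      rw [this.2.1, h20]
    exact one_ne_zero ((h4 1).mp h21)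
  · rintro ⟨T, hT, hper⟩
    have h20 : M₂ 0 = 0 := (h4 0).mpr rfl
    have h2T : M₂ (0 + T) = 0 := by
      have := hper 0
      simp only [Prod.mk.injEq] at this
      rw [this.2.1, h20]
    have : (0 : ℝ) + T = 0 := (h4 _).mp h2T
    linarith
  · rw [h5 t]
    exact hC (M₃ t)


/-- Case (F), `SL(2,ℝ)` with parameter `a ∈ (-1,0) ∪ (0,1)`: there is a
non-constant, non-periodic solution of the Lie–Poisson system lying on the zero
level of the Hamiltonian (giving a non-closed chain). -/
theorem stmt_9 (a : ℝ) (ha : a ∈ Set.Ioo (-1 : ℝ) 0 ∪ Set.Ioo (0 : ℝ) 1) :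
    ∃ M₁ M₂ M₃ : ℝ → ℝ,
      (∀ t, HasDerivAt M₁
        (M₂ t * M₃ t + (3 / (1 + a)) * Real.sign a * M₂ t) t) ∧
      (∀ t, HasDerivAt M₂
        (-(M₁ t * M₃ t) - (3 * (1 + a) / (4 * |a|)) * M₁ t) t) ∧
      (∀ t, HasDerivAt M₃
        ((1 / (4 * a ^ 2) - 1 / (a * (1 + a) ^ 2)) * M₁ t * M₂ t) t) ∧
      (¬ ∀ t : ℝ, (M₁ t, M₂ t, M₃ t) = (M₁ 0, M₂ 0, M₃ 0)) ∧
      (¬ ∃ T : ℝ, 0 < T ∧ ∀ t : ℝ,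
        (M₁ (t + T), M₂ (t + T), M₃ (t + T)) = (M₁ t, M₂ t, M₃ t)) ∧
      (∀ t : ℝ,
        (M₁ t ^ 2 + M₂ t ^ 2) / (2 * |a| * (1 + a)) + 3 * M₃ t
          + (9 / 16) * (a ^ 2 + 6 * a + 1) / (|a| * (1 + a)) = 0) := by
  rcases ha with ⟨ha1, ha2⟩ | ⟨ha1, ha2⟩
  · -- -1 < a < 0 : homoclinic case
    have ha0 : a ≠ 0 := ne_of_lt ha2
    have h1a : 0 < 1 + a := by linarith
    have h1a' : (1 : ℝ) + a ≠ 0 := h1a.ne'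
    have hsign : Real.sign a = -1 := Real.sign_of_neg ha2
    have habs : |a| = -a := abs_of_neg ha2
    have haa : a * (1 + a) < 0 := mul_neg_of_neg_of_pos ha2 h1a
    set m : ℝ := 3 / 16 * (a ^ 2 + 6 * a + 1) / (a * (1 + a)) with hm
    set p : ℝ := 3 * (a ^ 2 - 10 * a + 1) / (8 * (a * (1 + a))) with hpdef
    set q : ℝ := -3 * (3 * a ^ 2 + 2 * a + 3) / (8 * (a * (1 + a))) with hqdef
    set γ : ℝ := 1 / (4 * a ^ 2) - 1 / (a * (1 + a) ^ 2) with hγdef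
    set L : ℝ := -(6 * (a * (1 + a))) with hLdef
    have hγpos : 0 < γ := by
      have t1 : 0 < 1 / (4 * a ^ 2) := by positivity
      have t2 : 1 / (a * (1 + a) ^ 2) < 0 :=
        one_div_neg.mpr (mul_neg_of_neg_of_pos ha2 (by positivity))
      rw [hγdef]; linarith
    have hp : p < 0 := div_neg_of_pos_of_neg (by nlinarith) (by linarith)
    have hq : 0 < q := div_pos_of_neg_of_neg (by nlinarith) (by linarith)
    have hL : q - p = γ * L := by
      rw [hqdef, hpdef, hγdef, hLdef]
      field_simp
      ring
    refine glue a m p q γ L rfl ?_ ?_ ?_ (coreHom m p q γ L hp hq hγpos hL)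
    · rw [hsign, hpdef, hm]
      field_simp
      ring
    · rw [habs, hqdef, hm]
      field_simp
      ring
    · intro x
      rw [habs, hLdef, hm]
      field_simp
      ring
  · -- 0 < a < 1
    have ha0 : a ≠ 0 := ne_of_gt ha1
    have h1a : 0 < 1 + a := by linarith
    have h1a' : (1 : ℝ) + a ≠ 0 := h1a.ne'
    have hsign : Real.sign a = 1 := Real.sign_of_pos ha1
    have habs : |a| = a := abs_of_pos ha1
    have haa : 0 < a * (1 + a) := mul_pos ha1 h1a
    set m : ℝ := -(3 / 16 * (a ^ 2 + 6 * a + 1) / (a * (1 + a))) with hm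
    set p : ℝ := -(3 * (a ^ 2 - 10 * a + 1)) / (8 * (a * (1 + a))) with hpdef
    set q : ℝ := 3 * (3 * a ^ 2 + 2 * a + 3) / (8 * (a * (1 + a))) with hqdef
    set γ : ℝ := 1 / (4 * a ^ 2) - 1 / (a * (1 + a) ^ 2) with hγdef
    set L : ℝ := 6 * (a * (1 + a)) with hLdef
    have hγpos : 0 < γ := by
      have e1 : γ = (1 - a) ^ 2 / (4 * a ^ 2 * (1 + a) ^ 2) := by
        rw [hγdef]; field_simp; ring
      rw [e1]
      exact div_pos (pow_pos (by linarith) 2) (by positivity)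
    have hq : 0 < q := div_pos (by nlinarith) (by positivity)
    have hL : q - p = γ * L := by
      rw [hqdef, hpdef, hγdef, hLdef]
      field_simp
      ring
    have hα : p / 2 - m = 3 / (1 + a) * Real.sign a := by
      rw [hsign, hpdef, hm]
      field_simp
      ring
    have hβ : q / 2 - m = 3 * (1 + a) / (4 * |a|) := by
      rw [habs, hqdef, hm]
      field_simp
      ring
    have hCc : ∀ x : ℝ, L * (m - x) / (2 * |a| * (1 + a)) + 3 * x
        + 9 / 16 * (a ^ 2 + 6 * a + 1) / (|a| * (1 + a)) = 0 := by
      intro x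
      rw [habs, hLdef, hm]
      field_simp
      ring
    rcases lt_trichotomy (a ^ 2 - 10 * a + 1) 0 with hd | hd | hd
    · -- p > 0 : heteroclinic
      have hp : 0 < p := div_pos (by linarith) (by positivity)
      have hpq : p < q := by
        have hLpos : 0 < L := by rw [hLdef]; positivity
        nlinarith [mul_pos hγpos hLpos]
      exact glue a m p q γ L rfl hα hβ hCc (coreHet m p q γ L hp hpq hγpos hL)
    · -- p = 0 : degenerate
      have hp0 : p = 0 := by rw [hpdef, hd]; simp
      have hL0 : q = γ * L := by rw [← hL, hp0]; ring
      have := coreDeg m q γ L hq hγpos hL0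
      rw [← hp0] at this
      exact glue a m p q γ L rfl hα hβ hCc this
    · -- p < 0 : homoclinic
      have hp : p < 0 := div_neg_of_neg_of_pos (by linarith) (by positivity)
      exact glue a m p q γ L rfl hα hβ hCc (coreHom m p q γ L hp hq hγpos hL)
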